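/- Jensen-type lower bound on population EpG over a task mixture: let P be a random variable taking values in (0,1] with 1/P integrable, let K_max ≥ 1, and let μ_E > 0 be constant. Then E[(1 − (1−P)^{K_max})/P] · E[P] ≥ E[1 − (1−P)^{K_max}]; consequently the mixture EpG satisfies EpG* = μ_E · E[(1 − (1−P)^{K_max})/P] / E[1 − (1−P)^{K_max}] ≥ μ_E / E[P]. -/

import Mathlib

open MeasureTheory ProbabilityTheory

/-- Jensen-type lower bound on population EpG over a task
mixture: let `P` be a random variable taking values in `(0,1]` with `1/P`
integrable, let `Kmax ≥ 1`, and let `μE > 0` be constant. Then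
`E[(1 − (1−P)^Kmax)/P] · E[P] ≥ E[1 − (1−P)^Kmax]`; consequently the mixture
EpG satisfies
`EpG* = μE · E[(1 − (1−P)^Kmax)/P] / E[1 − (1−P)^Kmax] ≥ μE / E[P]`. -/
theorem jensen_epg_lower_bound
    {Ω : Type*} [MeasurableSpace Ω] (μ : Measure Ω) [IsProbabilityMeasure μ]
    (P : Ω → ℝ) (hPmeas : Measurable P)
    (hPmem : ∀ ω, P ω ∈ Set.Ioc (0 : ℝ) 1)
    (hPinv : Integrable (fun ω => 1 / P ω) μ)
    (Kmax : ℕ) (hKmax : 1 ≤ Kmax)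
    (μE : ℝ) (hμE : 0 < μE) :
    (∫ ω, (1 - (1 - P ω) ^ Kmax) / P ω ∂μ) * (∫ ω, P ω ∂μ)
        ≥ ∫ ω, (1 - (1 - P ω) ^ Kmax) ∂μ ∧
    μE * (∫ ω, (1 - (1 - P ω) ^ Kmax) / P ω ∂μ)
        / (∫ ω, (1 - (1 - P ω) ^ Kmax) ∂μ)
      ≥ μE / ∫ ω, P ω ∂μ := by
  set g : Ω → ℝ := fun ω => (1 - (1 - P ω) ^ Kmax) / P ω with hg
  set f : Ω → ℝ := fun ω => 1 - (1 - P ω) ^ Kmax with hf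
  -- basic pointwise facts
  have hP0 : ∀ ω, 0 < P ω := fun ω => (hPmem ω).1
  have hP1 : ∀ ω, P ω ≤ 1 := fun ω => (hPmem ω).2
  -- g as geometric sum
  have hgsum : ∀ ω, g ω = ∑ i ∈ Finset.range Kmax, (1 - P ω) ^ i := by
    intro ω
    have h := geom_sum_mul (1 - P ω) Kmax
    have hPne : P ω ≠ 0 := (hP0 ω).ne'
    rw [hg]
    field_simp
    linarith [h]
  have hfpos : ∀ ω, P ω ≤ f ω := by
    intro ω
    have h1 : (0:ℝ) ≤ 1 - P ω := by linarith [hP1 ω]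
    have h2 : 1 - P ω ≤ 1 := by linarith [hP0 ω]
    have := pow_le_pow_of_le_one h1 h2 hKmax
    simp only [hf, pow_one] at this ⊢
    linarith
  have hf1 : ∀ ω, f ω ≤ 1 := by
    intro ω
    have h1 : (0:ℝ) ≤ 1 - P ω := by linarith [hP1 ω]
    have := pow_nonneg h1 Kmax
    simp only [hf]; linarith
  have hf0 : ∀ ω, 0 ≤ f ω := fun ω => le_trans (hP0 ω).le (hfpos ω)
  have hg0 : ∀ ω, 0 ≤ g ω := fun ω => div_nonneg (hf0 ω) (hP0 ω).le
  have hgle : ∀ ω, g ω ≤ 1 / P ω := fun ω =>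
    (div_le_div_iff_of_pos_right (hP0 ω)).mpr (hf1 ω)
  -- antitonicity of the geometric-sum map
  have hanti : ∀ x y : Ω, P x ≤ P y → g y ≤ g x := by
    intro x y hxy
    rw [hgsum x, hgsum y]
    apply Finset.sum_le_sum
    intro i _
    exact pow_le_pow_left₀ (by linarith [hP1 y]) (by linarith) i
  have hkey : ∀ x y : Ω, (g x - g y) * (P x - P y) ≤ 0 := by
    intro x y
    rcases le_total (P x) (P y) with h | h
    · exact mul_nonpos_of_nonneg_of_nonpos (by linarith [hanti x y h]) (by linarith)
    · exact mul_nonpos_of_nonpos_of_nonneg (by linarith [hanti y x h]) (by linarith)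
  -- measurability / integrability
  have hfmeas : Measurable f := by
    apply Measurable.sub measurable_const
    exact ((measurable_const.sub hPmeas).pow measurable_const)
  have hgmeas : Measurable g := hfmeas.div hPmeas
  have hPint : Integrable P μ := by
    apply Integrable.mono' (integrable_const (1:ℝ)) hPmeas.aestronglyMeasurable
    filter_upwards with ω
    rw [Real.norm_eq_abs, abs_of_pos (hP0 ω)]; exact hP1 ω
  have hfint : Integrable f μ := by
    apply Integrable.mono' (integrable_const (1:ℝ)) hfmeas.aestronglyMeasurable
    filter_upwards with ω
    rw [Real.norm_eq_abs, abs_of_nonneg (hf0 ω)]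
    exact hf1 ω
  have hgint : Integrable g μ := by
    apply Integrable.mono' hPinv.abs hgmeas.aestronglyMeasurable
    filter_upwards with ω
    rw [Real.norm_eq_abs, abs_of_nonneg (hg0 ω)]
    exact (hgle ω).trans (le_abs_self _)
  set Ef : ℝ := ∫ ω, f ω ∂μ with hEf
  set Eg : ℝ := ∫ ω, g ω ∂μ with hEg
  set EP : ℝ := ∫ ω, P ω ∂μ with hEP
  have hgP : ∀ ω, g ω * P ω = f ω := fun ω =>
    div_mul_cancel₀ _ (hP0 ω).ne'
  have hfgy : Integrable (fun y => g y * P y) μ := by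
    simp only [hgP]; exact hfint
  have hEgP : (∫ y, g y * P y ∂μ) = Ef := by simp only [hgP, hEf]
  -- inner integral bound
  have hinner : ∀ x, f x - g x * EP - P x * Eg + Ef ≤ 0 := by
    intro x
    have heq : (fun y => (g x - g y) * (P x - P y))
        = fun y => (g x * P x - g x * P y) - (P x * g y - g y * P y) := by
      funext y; ring
    have h1 : Integrable (fun y => g x * P x - g x * P y) μ :=
      (integrable_const _).sub (hPint.const_mul _)
    have h2 : Integrable (fun y => P x * g y - g y * P y) μ :=
      (hgint.const_mul _).sub hfgy
    have hle : (∫ y, (g x - g y) * (P x - P y) ∂μ) ≤ 0 :=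
      integral_nonpos (fun y => hkey x y)
    have hcalc : (∫ y, (g x - g y) * (P x - P y) ∂μ)
        = f x - g x * EP - P x * Eg + Ef := by
      rw [heq, integral_sub h1 h2,
        integral_sub (integrable_const _) (hPint.const_mul _),
        integral_sub (hgint.const_mul _) hfgy,
        integral_const, integral_const_mul, integral_const_mul, hEgP]
      simp only [measure_univ, ENNReal.toReal_one, probReal_univ, smul_eq_mul, one_mul]
      rw [hgP x]
      ring
    linarith [hcalc ▸ hle]
  -- integrate the inner bound
  have houter : Ef - Eg * EP - EP * Eg + Ef ≤ 0 := by
    have hle : (∫ x, (f x - g x * EP - P x * Eg + Ef) ∂μ) ≤ 0 :=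
      integral_nonpos (fun x => hinner x)
    have h1 : Integrable (fun x => f x - g x * EP) μ :=
      hfint.sub (hgint.mul_const _)
    have h2 : Integrable (fun x => f x - g x * EP - P x * Eg) μ :=
      h1.sub (hPint.mul_const _)
    have hcalc : (∫ x, (f x - g x * EP - P x * Eg + Ef) ∂μ)
        = Ef - Eg * EP - EP * Eg + Ef := by
      rw [integral_add h2 (integrable_const _),
        integral_sub h1 (hPint.mul_const _),
        integral_sub hfint (hgint.mul_const _),
        integral_mul_const, integral_mul_const, integral_const]
      simp [measure_univ]
      rfl
    linarith [hcalc ▸ hle]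
  have hmain : Ef ≤ Eg * EP := by linarith
  -- positivity
  have hEPpos : 0 < EP := by
    rw [hEP, integral_pos_iff_support_of_nonneg (fun ω => (hP0 ω).le) hPint]
    have : Function.support P = Set.univ := by
      ext ω; simp [(hP0 ω).ne']
    rw [this]
    simp
  have hEfpos : 0 < Ef := by
    have : EP ≤ Ef := integral_mono hPint hfint hfpos
    linarith
  constructor
  · exact hmain
  · rw [ge_iff_le, div_le_div_iff₀ hEPpos hEfpos]
    nlinarith
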